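/- Let f = Σ_k f^k where each f^k is a polyhedral concave function on ℝⁿ, and let g, g^k be the respective concave conjugates g(w) = sup_t (f(t) − ⟨t,w⟩). A tuple (w^k) with Σ_k w^k = w satisfies g(w) = Σ_k g^k(w^k) if and only if T(w) = ⋂_k T^k(w^k), where T(w) (resp. T^k(w^k)) is the set of t attaining f(t) − ⟨t,w⟩ = g(w) (resp. f^k(t) − ⟨t,w^k⟩ = g^k(w^k)), provided these sets are nonempty. -/

import Mathlib

noncomputable section
open Set

abbrev V (n : ℕ) := EuclideanSpace ℝ (Fin n)

/-- A polyhedron: finite intersection of closed half-spaces. -/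
def IsPolyhedron {E : Type*} [AddCommGroup E] [Module ℝ E] (P : Set E) : Prop :=
  ∃ (m : ℕ) (L : Fin m → E →ₗ[ℝ] ℝ) (b : Fin m → ℝ), P = {x | ∀ i, L i x ≤ b i}

/-- with `f = Σ f^k` polyhedral concave and `g, g^k` the concave
conjugates (maxima attained), a decomposition `Σ w^k = w` satisfies
`g(w) = Σ g^k(w^k)` iff `T(w) = ⋂_k T^k(w^k)`. -/
theorem stmt14 (n K : ℕ) (fk : Fin K → V n → ℝ)
    (hconc : ∀ k, ConcaveOn ℝ univ (fk k))
    (hpoly : ∀ k, IsPolyhedron {p : V n × ℝ | p.2 ≤ fk k p.1})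
    (f : V n → ℝ) (hf : ∀ t, f t = ∑ k, fk k t)
    (w : V n) (W : Fin K → V n) (hsum : (∑ k, W k) = w)
    (gw : ℝ)
    (hgw : IsGreatest {s | ∃ t : V n, s = f t - (inner ℝ t w : ℝ)} gw)
    (gk : Fin K → ℝ)
    (hgk : ∀ k, IsGreatest
      {s | ∃ t : V n, s = fk k t - (inner ℝ t (W k) : ℝ)} (gk k)) :
    gw = (∑ k, gk k) ↔
      {t : V n | f t - (inner ℝ t w : ℝ) = gw}
        = ⋂ k, {t : V n | fk k t - (inner ℝ t (W k) : ℝ) = gk k} := by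
  have hdec : ∀ t : V n, f t - (inner ℝ t w : ℝ)
      = ∑ k, (fk k t - (inner ℝ t (W k) : ℝ)) := by
    intro t
    have : (inner ℝ t w : ℝ) = ∑ k, (inner ℝ t (W k) : ℝ) := by
      rw [← hsum, inner_sum]
    rw [hf, this, Finset.sum_sub_distrib]
  have hle : ∀ (t : V n) (k : Fin K),
      fk k t - (inner ℝ t (W k) : ℝ) ≤ gk k := fun t k =>
    (hgk k).2 ⟨t, rfl⟩
  constructor
  · intro heq
    ext t
    simp only [mem_setOf_eq, mem_iInter]
    rw [hdec t]
    rw [heq]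
    exact Finset.sum_eq_sum_iff_of_le (fun k _ => hle t k) |>.trans
      ⟨fun h k => h k (Finset.mem_univ k), fun h k _ => h k⟩
  · intro hT
    obtain ⟨t, ht⟩ := hgw.1
    have htT : t ∈ {t : V n | f t - (inner ℝ t w : ℝ) = gw} := ht.symm
    rw [hT] at htT
    simp only [mem_iInter, mem_setOf_eq] at htT
    rw [ht, hdec t]
    exact Finset.sum_congr rfl fun k _ => htT k
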